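/- Let d ≥ 1, let z ∈ ℝ^{d×d} be symmetric positive semidefinite, let Γ ∈ ℝ^{d×d} be symmetric positive definite, and let ε ≥ 0. Then tr( z·(Γ + ε·z)^{-1}·z ) ≥ tr(z)² / ( d·tr(Γ) + ε·d·tr(z) ). -/

import Mathlib

open Matrix
open scoped MatrixOrder

/-- Diagonal entries of a PSD real matrix are nonnegative. -/
lemma psd_diag_nonneg' {d : ℕ} {z : Matrix (Fin d) (Fin d) ℝ} (hz : z.PosSemidef)
    (i : Fin d) : 0 ≤ z i i := by
  exact hz.diag_nonneg

/-- Trace of a PSD real matrix is nonnegative. -/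
lemma psd_trace_nonneg' {d : ℕ} {z : Matrix (Fin d) (Fin d) ℝ} (hz : z.PosSemidef) :
    0 ≤ z.trace := by
  exact Finset.sum_nonneg fun i _ => psd_diag_nonneg' hz i

/-- Diagonal entries of a PD real matrix are positive. -/
lemma pd_diag_pos' {d : ℕ} {z : Matrix (Fin d) (Fin d) ℝ} (hz : z.PosDef)
    (i : Fin d) : 0 < z i i := by
  exact hz.diag_pos

/-- Trace of a PD real matrix is positive (nonempty index type). -/
lemma pd_trace_pos' {d : ℕ} (hd : 1 ≤ d) {z : Matrix (Fin d) (Fin d) ℝ} (hz : z.PosDef) :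
    0 < z.trace := by
  have : Nonempty (Fin d) := ⟨⟨0, hd⟩⟩
  exact Finset.sum_pos (fun i _ => pd_diag_pos' hz i) Finset.univ_nonempty

/-- Cauchy–Schwarz for traces: `tr(z)² ≤ tr(M) · tr(z M⁻¹ z)`. -/
lemma trace_sq_le_trace_mul_trace' {d : ℕ} {z M : Matrix (Fin d) (Fin d) ℝ}
    (hz : z.PosSemidef) (hM : M.PosDef) :
    z.trace ^ 2 ≤ M.trace * (z * M⁻¹ * z).trace := by
  set R := CFC.sqrt M with hRdef
  have hR : R.PosSemidef := (CFC.sqrt_nonneg M).posSemidef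
  have hRR : R * R = M := CFC.sqrt_mul_sqrt_self M hM.posSemidef.nonneg
  have hdet : IsUnit R.det := by
    have : R.det * R.det = M.det := by rw [← det_mul, hRR]
    have hMdet := hM.det_pos
    refine isUnit_iff_ne_zero.2 fun h => ?_
    rw [h, mul_zero] at this
    exact hMdet.ne this
  have hRinv : R * R⁻¹ = 1 := mul_nonsing_inv R hdet
  have hRsymm : Rᵀ = R := hR.isHermitian
  have hRinvsymm : (R⁻¹)ᵀ = R⁻¹ := by rw [transpose_nonsing_inv, hRsymm]
  set B := R⁻¹ * z with hBdef
  have htr : z.trace = (R * B).trace := by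
    rw [hBdef, ← Matrix.mul_assoc, hRinv, Matrix.one_mul]
  have hzsymm : zᵀ = z := hz.isHermitian
  have cs := Finset.sum_mul_sq_le_sq_mul_sq (Finset.univ : Finset (Fin d × Fin d))
      (fun p => R p.1 p.2) (fun p => B p.2 p.1)
  have h1 : ∑ p : Fin d × Fin d, R p.1 p.2 * B p.2 p.1 = (R * B).trace := by
    rw [Matrix.trace, Fintype.sum_prod_type]
    simp [Matrix.mul_apply, Matrix.diag]
  have h2 : ∑ p : Fin d × Fin d, (R p.1 p.2) ^ 2 = M.trace := by
    rw [← hRR, Matrix.trace, Fintype.sum_prod_type]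
    simp only [Matrix.mul_apply, Matrix.diag]
    congr 1; ext i; congr 1; ext j
    rw [sq]
    congr 1
    conv_rhs => rw [← hRsymm]
    rfl
  have h3 : ∑ p : Fin d × Fin d, (B p.2 p.1) ^ 2 = (z * M⁻¹ * z).trace := by
    have hBBt : B * Bᵀ = R⁻¹ * z * (z * R⁻¹) := by
      rw [hBdef, transpose_mul, hzsymm, hRinvsymm]
    have hMinv : M⁻¹ = R⁻¹ * R⁻¹ := by rw [← hRR, Matrix.mul_inv_rev]
    have : (B * Bᵀ).trace = (z * M⁻¹ * z).trace := by
      rw [hBBt, hMinv]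
      rw [Matrix.trace_mul_comm (R⁻¹ * z) (z * R⁻¹)]
      rw [Matrix.mul_assoc, Matrix.mul_assoc, Matrix.mul_assoc]
    rw [← this, Matrix.trace, Fintype.sum_prod_type]
    simp only [Matrix.mul_apply, Matrix.diag, Matrix.transpose_apply, sq]
    rw [Finset.sum_comm]
  rw [h1, h2, h3] at cs
  rw [htr]
  exact cs

/-- `tr(z(Γ+εz)⁻¹z) ≥ tr(z)²/(d·tr(Γ) + ε·d·tr(z))`. -/
theorem trace_z_inv_z_lower_bound
    (d : ℕ) (hd : 1 ≤ d)
    (z Γm : Matrix (Fin d) (Fin d) ℝ)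
    (hz : z.PosSemidef) (hΓ : Γm.PosDef)
    (ε : ℝ) (hε : 0 ≤ ε) :
    z.trace ^ 2 / ((d : ℝ) * Γm.trace + ε * (d : ℝ) * z.trace) ≤
      (z * (Γm + ε • z)⁻¹ * z).trace := by
  have hεz : (ε • z).PosSemidef := by
    exact hz.smul hε
  have hM : (Γm + ε • z).PosDef := hΓ.add_posSemidef hεz
  have hztr : 0 ≤ z.trace := psd_trace_nonneg' hz
  have hΓtr : 0 < Γm.trace := pd_trace_pos' hd hΓ
  have hd1 : (1 : ℝ) ≤ d := by exact_mod_cast hd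
  have hdpos : (0:ℝ) < d := lt_of_lt_of_le one_pos hd1
  have hden : 0 < (d : ℝ) * Γm.trace + ε * (d : ℝ) * z.trace := by positivity
  have key := trace_sq_le_trace_mul_trace' hz hM
  have hMtr : (Γm + ε • z).trace = Γm.trace + ε * z.trace := by
    rw [Matrix.trace_add, Matrix.trace_smul]; simp [smul_eq_mul]
  have hMle : (Γm + ε • z).trace ≤ (d : ℝ) * Γm.trace + ε * (d : ℝ) * z.trace := by
    rw [hMtr]
    have h1 : Γm.trace ≤ (d : ℝ) * Γm.trace := le_mul_of_one_le_left hΓtr.le hd1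
    have h2 : ε * z.trace ≤ ε * (d : ℝ) * z.trace := by
      rw [mul_assoc]
      exact mul_le_mul_of_nonneg_left (le_mul_of_one_le_left hztr hd1) hε
    linarith
  have htrq : 0 ≤ (z * (Γm + ε • z)⁻¹ * z).trace := by
    have h := trace_sq_le_trace_mul_trace' hz hM
    nlinarith [sq_nonneg z.trace, (pd_trace_pos' hd hM)]
  rw [div_le_iff₀ hden]
  calc z.trace ^ 2 ≤ (Γm + ε • z).trace * (z * (Γm + ε • z)⁻¹ * z).trace := key
    _ ≤ ((d : ℝ) * Γm.trace + ε * (d : ℝ) * z.trace) * (z * (Γm + ε • z)⁻¹ * z).trace :=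
        mul_le_mul_of_nonneg_right hMle htrq
    _ = (z * (Γm + ε • z)⁻¹ * z).trace * ((d : ℝ) * Γm.trace + ε * (d : ℝ) * z.trace) :=
        mul_comm _ _
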